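/- arXiv:2212.04166 — 4 statements merged into one kernel-verified Lean document; each statement's English description precedes it below -/
import Mathlib

section
/- With the gluing construction J as above, for a vertex w of H, the set of vertices maximally distant from w in J equals (MD_H(w) \ {v_1,...,v_k}) ∪ ⋃_{i=1}^k MD_{G_i}(u_i), where MD_G(x) denotes the set of vertices maximally distant from x in G (with u_i identified with v_i in J). -/
open SimpleGraph

/-- `y` is maximally distant from `x` in `G`: no neighbor of `y` is farther from `x` than `y`. -/
def MaxDistantFrom {V : Type*} (G : SimpleGraph V) (y x : V) : Prop :=
  ∀ z, G.Adj y z → G.dist z x ≤ G.dist y x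

/-- `u` and `v` are mutually maximally distant in `G`. -/
def MutuallyMaxDistant {V : Type*} (G : SimpleGraph V) (u v : V) : Prop :=
  MaxDistantFrom G u v ∧ MaxDistantFrom G v u

/-- The strong resolving graph of `G`: edges are the mutually maximally distant pairs. -/
def srGraph {V : Type*} (G : SimpleGraph V) : SimpleGraph V where
  Adj u v := u ≠ v ∧ MutuallyMaxDistant G u v
  symm := ⟨fun u v h => ⟨h.1.symm, h.2.2, h.2.1⟩⟩
  loopless := ⟨fun u h => h.1 rfl⟩

/-- `w` strongly resolves `u` and `v`: `v` lies on a shortest `w`–`u` path, or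
`u` lies on a shortest `w`–`v` path. -/
def StronglyResolves {V : Type*} (G : SimpleGraph V) (w u v : V) : Prop :=
  G.dist w v + G.dist v u = G.dist w u ∨ G.dist w u + G.dist u v = G.dist w v

/-- `R` is a strong resolving set for `G`. -/
def StrongResolvingSet {V : Type*} (G : SimpleGraph V) (R : Set V) : Prop :=
  ∀ u v : V, u ≠ v → ∃ w ∈ R, StronglyResolves G w u v
/-- The graph obtained from the disjoint union of the graphs `G i` and `H` by identifying,
for each `i`, the vertex `u i` of `G i` with the vertex `v i` of `H`.  The vertices of
`G i` other than `u i` keep their identity (as `Sum.inl ⟨i, x⟩`), the vertices of `H`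
keep their identity (as `Sum.inr w`), and `u i` is identified with `v i`. -/
def glue {k : ℕ} {α : Fin k → Type*} {β : Type*}
    (G : ∀ i, SimpleGraph (α i)) (H : SimpleGraph β) (u : ∀ i, α i) (v : Fin k → β) :
    SimpleGraph ((Σ i, {x : α i // x ≠ u i}) ⊕ β) where
  Adj a b :=
    (∃ (i : Fin k) (x y : {z : α i // z ≠ u i}), (G i).Adj x.1 y.1 ∧
        a = Sum.inl ⟨i, x⟩ ∧ b = Sum.inl ⟨i, y⟩) ∨
    (∃ (i : Fin k) (x : {z : α i // z ≠ u i}), (G i).Adj x.1 (u i) ∧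
        ((a = Sum.inl ⟨i, x⟩ ∧ b = Sum.inr (v i)) ∨
         (b = Sum.inl ⟨i, x⟩ ∧ a = Sum.inr (v i)))) ∨
    (∃ w w' : β, H.Adj w w' ∧ a = Sum.inr w ∧ b = Sum.inr w')
  symm := by
    constructor
    rintro a b (⟨i, x, y, hxy, ha, hb⟩ | ⟨i, x, hx, h | h⟩ | ⟨w, w', hww, ha, hb⟩)
    · exact Or.inl ⟨i, y, x, hxy.symm, hb, ha⟩
    · exact Or.inr (Or.inl ⟨i, x, hx, Or.inr h⟩)
    · exact Or.inr (Or.inl ⟨i, x, hx, Or.inl h⟩)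
    · exact Or.inr (Or.inr ⟨w', w, hww.symm, hb, ha⟩)
  loopless := by
    constructor
    rintro a (⟨i, x, y, hxy, ha, hb⟩ | ⟨i, x, _, ⟨ha, hb⟩ | ⟨ha, hb⟩⟩ | ⟨w, w', hww, ha, hb⟩)
    · subst ha
      injection hb with h
      injection h with h1 h2
      subst h2
      exact (G i).loopless.irrefl _ hxy
    · subst ha; simp at hb
    · subst ha; simp at hb
    · subst ha
      injection hb with h
      subst h
      exact H.loopless.irrefl _ hww

section Aux

private lemma lipschitz_walk {V : Type*} {Γ : SimpleGraph V} (f : V → ℕ)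
    (hf : ∀ a b, Γ.Adj a b → f a ≤ f b + 1) {a b : V} (p : Γ.Walk a b) :
    f a ≤ f b + p.length := by
  induction p with
  | nil => simp
  | cons h p ih =>
    have := hf _ _ h
    simp only [Walk.length_cons]
    omega

private lemma adj_dist_le {V : Type*} {Γ : SimpleGraph V} (hc : Γ.Connected) {x y z : V}
    (h : Γ.Adj x y) : Γ.dist x z ≤ Γ.dist y z + 1 := by
  have h1 : Γ.dist x y ≤ 1 := by simpa using SimpleGraph.dist_le h.toWalk
  have h2 := hc.dist_triangle (u := x) (v := y) (w := z)
  omega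

private lemma exists_adj_of_connected {V : Type*} {Γ : SimpleGraph V} (hc : Γ.Connected)
    (hn : Nontrivial V) (x : V) : ∃ y, Γ.Adj x y := by
  obtain ⟨z, hz⟩ := exists_ne x
  obtain ⟨p⟩ := hc x z
  cases p with
  | nil => exact absurd rfl hz.symm
  | cons h _ => exact ⟨_, h⟩

variable {k : ℕ} {α : Fin k → Type*} {β : Type*}
  (G : ∀ i, SimpleGraph (α i)) (H : SimpleGraph β) (u : ∀ i, α i) (v : Fin k → β)

/-- glue halts test: inr as hom -/
private def inrHom : H →g glue G H u v :=
  ⟨Sum.inr, fun h => Or.inr (Or.inr ⟨_, _, h, rfl, rfl⟩)⟩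

open Classical in
private noncomputable def inlFun (i : Fin k) : α i → ((Σ i, {x : α i // x ≠ u i}) ⊕ β) :=
  fun x => if h : x = u i then Sum.inr (v i) else Sum.inl ⟨i, ⟨x, h⟩⟩

private lemma inlFun_adj (i : Fin k) {x y : α i} (h : (G i).Adj x y) :
    (glue G H u v).Adj (inlFun u v i x) (inlFun u v i y) := by
  unfold inlFun
  by_cases hx : x = u i <;> by_cases hy : y = u i
  · exact absurd (hx.trans hy.symm) h.ne
  · rw [dif_pos hx, dif_neg hy]
    exact Or.inr (Or.inl ⟨i, ⟨y, hy⟩, by subst hx; exact h.symm, Or.inr ⟨rfl, rfl⟩⟩)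
  · rw [dif_neg hx, dif_pos hy]
    exact Or.inr (Or.inl ⟨i, ⟨x, hx⟩, by subst hy; exact h, Or.inl ⟨rfl, rfl⟩⟩)
  · rw [dif_neg hx, dif_neg hy]
    exact Or.inl ⟨i, ⟨x, hx⟩, ⟨y, hy⟩, h, rfl, rfl⟩

private noncomputable def inlHom (i : Fin k) : G i →g glue G H u v :=
  ⟨inlFun u v i, inlFun_adj G H u v i⟩

private noncomputable def fdist (w : β) : ((Σ i, {x : α i // x ≠ u i}) ⊕ β) → ℕ
  | Sum.inl ⟨i, x⟩ => (G i).dist x.1 (u i) + H.dist (v i) w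
  | Sum.inr z => H.dist z w

private lemma fdist_lipschitz (hGc : ∀ i, (G i).Connected) (hHc : H.Connected) (w : β) :
    ∀ a b, (glue G H u v).Adj a b → fdist G H u v w a ≤ fdist G H u v w b + 1 := by
  rintro a b (⟨i, x, y, hxy, rfl, rfl⟩ | ⟨i, x, hx, ⟨rfl, rfl⟩ | ⟨rfl, rfl⟩⟩ |
    ⟨z, z', hzz, rfl, rfl⟩)
  · simp only [fdist]
    have := adj_dist_le (hGc i) (z := u i) hxy
    omega
  · simp only [fdist]
    have : (G i).dist x.1 (u i) ≤ 1 := by simpa using SimpleGraph.dist_le hx.toWalk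
    omega
  · simp only [fdist]
    omega
  · simp only [fdist]
    have := adj_dist_le hHc (z := w) hzz
    omega

private lemma dist_inr (hGc : ∀ i, (G i).Connected) (hHc : H.Connected) (w z : β) :
    (glue G H u v).dist (Sum.inr z) (Sum.inr w) = H.dist z w := by
  obtain ⟨p, hp⟩ := hHc.exists_walk_length_eq_dist z w
  have hub : (glue G H u v).dist (Sum.inr z) (Sum.inr w) ≤ H.dist z w := by
    have := SimpleGraph.dist_le (p.map (inrHom G H u v))
    rwa [Walk.length_map, hp] at this
  have hr : (glue G H u v).Reachable (Sum.inr z) (Sum.inr w) := ⟨p.map (inrHom G H u v)⟩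
  obtain ⟨q, hq⟩ := hr.exists_walk_length_eq_dist
  have hlb := lipschitz_walk _ (fdist_lipschitz G H u v hGc hHc w) q
  simp only [fdist, SimpleGraph.dist_self, hq] at hlb
  omega

private lemma dist_inl (hGc : ∀ i, (G i).Connected) (hHc : H.Connected) (w : β)
    (i : Fin k) (x : {z : α i // z ≠ u i}) :
    (glue G H u v).dist (Sum.inl ⟨i, x⟩) (Sum.inr w) =
      (G i).dist x.1 (u i) + H.dist (v i) w := by
  obtain ⟨p, hp⟩ := (hGc i).exists_walk_length_eq_dist x.1 (u i)
  obtain ⟨q, hq⟩ := hHc.exists_walk_length_eq_dist (v i) w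
  have e1 : inlFun u v i x.1 = Sum.inl ⟨i, x⟩ := by
    rw [inlFun, dif_neg x.2]
  have e2 : inlFun u v i (u i) = Sum.inr (v i) := by
    rw [inlFun, dif_pos rfl]
  have r : (glue G H u v).Walk (Sum.inl ⟨i, x⟩) (Sum.inr w) :=
    ((p.map (inlHom G H u v i)).copy e1 e2).append (q.map (inrHom G H u v))
  have hub : (glue G H u v).dist (Sum.inl ⟨i, x⟩) (Sum.inr w) ≤
      (G i).dist x.1 (u i) + H.dist (v i) w := by
    have h2 := SimpleGraph.dist_le
      ((((p.map (inlHom G H u v i)).copy e1 e2).append (q.map (inrHom G H u v)) :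
        (glue G H u v).Walk (Sum.inl ⟨i, x⟩) (Sum.inr w)))
    refine h2.trans (le_of_eq ?_)
    exact (Walk.length_append _ _).trans (by rw [← hp, ← hq, ← Walk.length_map (inlHom G H u v i) p, ← Walk.length_map (inrHom G H u v) q]; exact congrArg (· + _) (Walk.length_copy _ _ _))
  have hr : (glue G H u v).Reachable (Sum.inl ⟨i, x⟩) (Sum.inr w) := ⟨r⟩
  obtain ⟨q', hq'⟩ := hr.exists_walk_length_eq_dist
  have hlb := lipschitz_walk _ (fdist_lipschitz G H u v hGc hHc w) q'
  simp only [fdist, SimpleGraph.dist_self, hq'] at hlb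
  omega

end Aux

/-- For a vertex `w` of `H`, the set of vertices maximally distant from `w` in the glued
graph `J` is `(MD_H(w) \ {v 1,…,v k}) ∪ ⋃ i, MD_{G i}(u i)`. -/
theorem glue_maxDistant_from_H_vertex {k : ℕ} {α : Fin k → Type*} {β : Type*}
    (G : ∀ i, SimpleGraph (α i)) (H : SimpleGraph β)
    (u : ∀ i, α i) (v : Fin k → β)
    (hGc : ∀ i, (G i).Connected) (hHc : H.Connected)
    (hGn : ∀ i, Nontrivial (α i)) (hHn : Nontrivial β) (w : β) :
    {a | MaxDistantFrom (glue G H u v) a (Sum.inr w)} =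
      {a | (∃ z : β, a = Sum.inr z ∧ MaxDistantFrom H z w ∧ ∀ i, z ≠ v i) ∨
        (∃ (i : Fin k) (x : {z : α i // z ≠ u i}),
          a = Sum.inl ⟨i, x⟩ ∧ MaxDistantFrom (G i) x.1 (u i))} := by
  have hJr := dist_inr G H u v hGc hHc w
  have hJl := dist_inl G H u v hGc hHc w
  ext a
  simp only [Set.mem_setOf_eq]
  cases a with
  | inr z =>
    constructor
    · intro hmax
      refine Or.inl ⟨z, rfl, ?_, ?_⟩
      · intro z' hz'
        have h := hmax (Sum.inr z') (Or.inr (Or.inr ⟨z, z', hz', rfl, rfl⟩))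
        rwa [hJr, hJr] at h
      · intro i hvi
        subst hvi
        obtain ⟨y, hy⟩ := exists_adj_of_connected (hGc i) (hGn i) (u i)
        have h := hmax (Sum.inl ⟨i, ⟨y, hy.ne'⟩⟩)
          (Or.inr (Or.inl ⟨i, ⟨y, hy.ne'⟩, hy.symm, Or.inr ⟨rfl, rfl⟩⟩))
        rw [hJl, hJr] at h
        have hpos : 0 < (G i).dist y (u i) := (hGc i).pos_dist_of_ne hy.ne'
        simp only at h
        omega
    · rintro (⟨z', hz', hmd, hne⟩ | ⟨i, x, h, -⟩)
      · injection hz' with h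
        subst h
        rintro b (⟨i, x, y, hxy, ha, hb⟩ | ⟨i, x, hx, ⟨ha, hb⟩ | ⟨hb, ha⟩⟩ |
          ⟨w1, w2, hww, ha, hb⟩)
        · exact absurd ha (by simp)
        · exact absurd ha (by simp)
        · injection ha with h'
          exact absurd h' (hne i)
        · injection ha with h'
          subst h'
          subst hb
          rw [hJr, hJr]
          exact hmd _ hww
      · exact absurd h (by simp)
  | inl p =>
    obtain ⟨i, x⟩ := p
    constructor
    · intro hmax
      refine Or.inr ⟨i, x, rfl, ?_⟩
      intro y hy
      by_cases hyu : y = u i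
      · subst hyu
        simp [SimpleGraph.dist_self]
      · have h := hmax (Sum.inl ⟨i, ⟨y, hyu⟩⟩) (Or.inl ⟨i, x, ⟨y, hyu⟩, hy, rfl, rfl⟩)
        rw [hJl, hJl] at h
        simp only at h
        omega
    · rintro (⟨z, hz, -⟩ | ⟨j, x', hax, hmd⟩)
      · exact absurd hz (by simp)
      · obtain ⟨h1, h2⟩ := Sigma.mk.inj_iff.mp (Sum.inl.inj hax)
        subst h1
        have hx' : x = x' := eq_of_heq h2
        subst hx'
        rintro b (⟨i', x0, y, hxy, ha, hb⟩ | ⟨i', x0, hx0, ⟨ha, hb⟩ | ⟨hb, ha⟩⟩ |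
          ⟨w1, w2, hww, ha, hb⟩)
        · obtain ⟨h1', h3⟩ := Sigma.mk.inj_iff.mp (Sum.inl.inj ha)
          subst h1'
          have hx0 : x = x0 := eq_of_heq h3
          subst hx0
          subst hb
          rw [hJl, hJl]
          have := hmd y.1 hxy
          omega
        · obtain ⟨h1', h3⟩ := Sigma.mk.inj_iff.mp (Sum.inl.inj ha)
          subst h1'
          subst hb
          rw [hJl, hJr]
          omega
        · exact absurd ha (by simp)
        · exact absurd ha (by simp)
end

section
/- With the gluing construction J, let u'_j ∈ V(G_j) \ {u_j}. Then the set of vertices maximally distant from u'_j in J equals (MD_{G_j}(u'_j) \ {u_j}) ∪ (MD_H(v_j) \ {v_1,...,v_k}) ∪ ⋃_{i≠j} MD_{G_i}(u_i). -/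
open SimpleGraph

section Aux

variable {k : ℕ} {α : Fin k → Type*} {β : Type*}
  (G : ∀ i, SimpleGraph (α i)) (H : SimpleGraph β) (u : ∀ i, α i) (v : Fin k → β)

/-- `H` embeds into the glued graph. -/
def ιH : H →g glue G H u v where
  toFun := Sum.inr
  map_rel' := fun h => Or.inr (Or.inr ⟨_, _, h, rfl, rfl⟩)

open Classical in
/-- Each `G i` maps into the glued graph, sending `u i` to `Sum.inr (v i)`. -/
noncomputable def ιG (i : Fin k) : G i →g glue G H u v where
  toFun x := if h : x = u i then Sum.inr (v i) else Sum.inl ⟨i, ⟨x, h⟩⟩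
  map_rel' := by
    intro x y hxy
    by_cases hx : x = u i <;> by_cases hy : y = u i
    · exact absurd (hx ▸ hy ▸ hxy) ((G i).loopless.irrefl _)
    · simp only [dif_pos hx, dif_neg hy]
      exact Or.inr (Or.inl ⟨i, ⟨y, hy⟩, hx ▸ hxy.symm, Or.inr ⟨rfl, rfl⟩⟩)
    · simp only [dif_neg hx, dif_pos hy]
      exact Or.inr (Or.inl ⟨i, ⟨x, hx⟩, hy ▸ hxy, Or.inl ⟨rfl, rfl⟩⟩)
    · simp only [dif_neg hx, dif_neg hy]
      exact Or.inl ⟨i, ⟨x, hx⟩, ⟨y, hy⟩, hxy, rfl, rfl⟩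

lemma iG_apply_ne (i : Fin k) (x : α i) (h : x ≠ u i) :
    ιG G H u v i x = Sum.inl ⟨i, ⟨x, h⟩⟩ := by
  simp only [ιG]; exact dif_neg h

lemma iG_apply_u (i : Fin k) : ιG G H u v i (u i) = Sum.inr (v i) := by
  simp only [ιG]; exact dif_pos rfl

lemma iH_apply (z : β) : ιH G H u v z = Sum.inr z := rfl

lemma dist_map_le {V W : Type*} {A : SimpleGraph V} {B : SimpleGraph W} (f : A →g B)
    (hA : A.Connected) (x y : V) : B.dist (f x) (f y) ≤ A.dist x y := by
  obtain ⟨p, hp⟩ := hA.exists_walk_length_eq_dist x y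
  calc B.dist (f x) (f y) ≤ (p.map f).length := SimpleGraph.dist_le _
    _ = p.length := SimpleGraph.Walk.length_map f p
    _ = A.dist x y := hp

lemma adj_dist_le_one {V : Type*} {A : SimpleGraph V} {x y : V} (h : A.Adj x y) :
    A.dist x y ≤ 1 := by simpa using SimpleGraph.dist_le h.toWalk

lemma exists_adj {V : Type*} {A : SimpleGraph V} (hA : A.Connected) (hn : Nontrivial V)
    (x : V) : ∃ y, A.Adj x y := by
  obtain ⟨z, hz⟩ := exists_ne x
  obtain ⟨p⟩ := hA.preconnected x z
  cases p with
  | nil => exact absurd rfl hz.symm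
  | cons h _ => exact ⟨_, h⟩

lemma glue_connected (hGc : ∀ i, (G i).Connected) (hHc : H.Connected) :
    (glue G H u v).Connected := by
  have hβ : Nonempty β := hHc.nonempty
  rw [connected_iff]
  refine ⟨?_, ⟨Sum.inr hβ.some⟩⟩
  have key : ∀ a : (Σ i, {x : α i // x ≠ u i}) ⊕ β,
      ∃ z : β, (glue G H u v).Reachable a (Sum.inr z) := by
    rintro (⟨i, x⟩ | z)
    · refine ⟨v i, ?_⟩
      have h := ((hGc i).preconnected x.1 (u i)).map (ιG G H u v i)
      rwa [iG_apply_ne G H u v i x.1 x.2, iG_apply_u] at h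
    · exact ⟨z, Reachable.refl _⟩
  intro a b
  obtain ⟨z, hz⟩ := key a
  obtain ⟨w, hw⟩ := key b
  exact hz.trans ((((hHc.preconnected z w)).map (ιH G H u v)).trans hw.symm)

/-- The claimed distance from a vertex of `G i` to the base vertex `u'` of `G j`. -/
noncomputable def Faux (j : Fin k) (u' : α j) (i : Fin k) (y : α i) : ℕ :=
  if h : i = j then (G j).dist (h ▸ y) u'
  else (G i).dist y (u i) + H.dist (v i) (v j) + (G j).dist (u j) u'

/-- The claimed distance from a vertex of the glue to the base vertex. -/
noncomputable def Fpot (j : Fin k) (u' : α j) : (Σ i, {x : α i // x ≠ u i}) ⊕ β → ℕ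
  | Sum.inl ⟨i, x⟩ => Faux G H u v j u' i x.1
  | Sum.inr z => H.dist z (v j) + (G j).dist (u j) u'

lemma Faux_self (j : Fin k) (u' : α j) (y : α j) :
    Faux G H u v j u' j y = (G j).dist y u' := by
  unfold Faux; rw [dif_pos rfl]

lemma Fpot_inl (j : Fin k) (u' : α j) (i : Fin k) (x : {z : α i // z ≠ u i}) :
    Fpot G H u v j u' (Sum.inl ⟨i, x⟩) = Faux G H u v j u' i x.1 := rfl

lemma Fpot_inr (j : Fin k) (u' : α j) (z : β) :
    Fpot G H u v j u' (Sum.inr z) = H.dist z (v j) + (G j).dist (u j) u' := rfl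

lemma Faux_ne {i j : Fin k} (h : i ≠ j) (u' : α j) (y : α i) :
    Faux G H u v j u' i y =
      (G i).dist y (u i) + H.dist (v i) (v j) + (G j).dist (u j) u' := by
  unfold Faux; rw [dif_neg h]

lemma Fpot_lip (hGc : ∀ i, (G i).Connected) (hHc : H.Connected) (j : Fin k) (u' : α j)
    {a b : (Σ i, {x : α i // x ≠ u i}) ⊕ β} (hab : (glue G H u v).Adj a b) :
    Fpot G H u v j u' a ≤ Fpot G H u v j u' b + 1 := by
  rcases hab with ⟨i, x, y, hxy, ha, hb⟩ | ⟨i, x, hx, ⟨ha, hb⟩ | ⟨hb, ha⟩⟩ |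
    ⟨w, w', hww, ha, hb⟩ <;> subst ha <;> subst hb
  · show Faux G H u v j u' i x.1 ≤ Faux G H u v j u' i y.1 + 1
    by_cases hij : i = j
    · subst hij
      rw [Faux_self, Faux_self]
      have h1 := (hGc i).dist_triangle (u := x.1) (v := y.1) (w := u')
      have h2 := adj_dist_le_one hxy
      omega
    · rw [Faux_ne G H u v hij, Faux_ne G H u v hij]
      have h1 := (hGc i).dist_triangle (u := x.1) (v := y.1) (w := u i)
      have h2 := adj_dist_le_one hxy
      omega
  · show Faux G H u v j u' i x.1 ≤ (H.dist (v i) (v j) + (G j).dist (u j) u') + 1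
    by_cases hij : i = j
    · subst hij
      rw [Faux_self]
      have h1 := (hGc i).dist_triangle (u := x.1) (v := u i) (w := u')
      have h2 := adj_dist_le_one hx
      have h3 : H.dist (v i) (v i) = 0 := SimpleGraph.dist_self
      omega
    · rw [Faux_ne G H u v hij]
      have h2 := adj_dist_le_one hx
      omega
  · show H.dist (v i) (v j) + (G j).dist (u j) u' ≤ Faux G H u v j u' i x.1 + 1
    by_cases hij : i = j
    · subst hij
      rw [Faux_self]
      have h1 := (hGc i).dist_triangle (u := u i) (v := x.1) (w := u')
      have h2 := adj_dist_le_one hx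
      have h3 : H.dist (v i) (v i) = 0 := SimpleGraph.dist_self
      rw [SimpleGraph.dist_comm] at h2
      omega
    · rw [Faux_ne G H u v hij]
      omega
  · show H.dist w (v j) + (G j).dist (u j) u' ≤ (H.dist w' (v j) + (G j).dist (u j) u') + 1
    have h1 := hHc.dist_triangle (u := w) (v := w') (w := v j)
    have h2 := adj_dist_le_one hww
    omega

lemma Fpot_le_length' (hGc : ∀ i, (G i).Connected) (hHc : H.Connected)
    (j : Fin k) (u' : α j)
    {a b : (Σ i, {x : α i // x ≠ u i}) ⊕ β}
    (p : (glue G H u v).Walk a b) :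
    Fpot G H u v j u' a ≤ p.length + Fpot G H u v j u' b := by
  induction p with
  | nil => simp
  | cons h p ih =>
    have := Fpot_lip G H u v hGc hHc j u' h
    simp only [SimpleGraph.Walk.length_cons]
    omega

lemma Fpot_le_length (hGc : ∀ i, (G i).Connected) (hHc : H.Connected)
    (j : Fin k) (u' : {z : α j // z ≠ u j})
    {a : (Σ i, {x : α i // x ≠ u i}) ⊕ β}
    (p : (glue G H u v).Walk a (Sum.inl ⟨j, u'⟩)) :
    Fpot G H u v j u'.1 a ≤ p.length := by
  have h := Fpot_le_length' G H u v hGc hHc j u'.1 p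
  have h0 : Fpot G H u v j u'.1 (Sum.inl ⟨j, u'⟩) = 0 := by
    show Faux G H u v j u'.1 j u'.1 = 0
    rw [Faux_self]
    exact SimpleGraph.dist_self
  omega

lemma glue_dist_eq (hGc : ∀ i, (G i).Connected) (hHc : H.Connected)
    (j : Fin k) (u' : {z : α j // z ≠ u j})
    (a : (Σ i, {x : α i // x ≠ u i}) ⊕ β) :
    (glue G H u v).dist a (Sum.inl ⟨j, u'⟩) = Fpot G H u v j u'.1 a := by
  have hJ := glue_connected G H u v hGc hHc
  refine le_antisymm ?_ ?_
  · -- upper bound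
    have hvj : (ιG G H u v j) u'.1 = Sum.inl ⟨j, u'⟩ := iG_apply_ne G H u v j u'.1 u'.2
    rcases a with ⟨i, x⟩ | z
    · by_cases hij : i = j
      · subst hij
        show _ ≤ Faux G H u v i u'.1 i x.1
        rw [Faux_self]
        have h := dist_map_le (ιG G H u v i) (hGc i) x.1 u'.1
        rwa [iG_apply_ne G H u v i x.1 x.2, hvj] at h
      · show _ ≤ Faux G H u v j u'.1 i x.1
        rw [Faux_ne G H u v hij]
        have h1 := dist_map_le (ιG G H u v i) (hGc i) x.1 (u i)
        rw [iG_apply_ne G H u v i x.1 x.2, iG_apply_u] at h1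
        simp only [Subtype.coe_eta] at h1
        have h2 := dist_map_le (ιH G H u v) hHc (v i) (v j)
        simp only [iH_apply] at h2
        have h3 := dist_map_le (ιG G H u v j) (hGc j) (u j) u'.1
        rw [iG_apply_u, hvj] at h3
        have t1 := hJ.dist_triangle (u := Sum.inl ⟨i, x⟩) (v := Sum.inr (v i))
          (w := Sum.inl ⟨j, u'⟩)
        have t2 := hJ.dist_triangle (u := (Sum.inr (v i) : (Σ i, {x : α i // x ≠ u i}) ⊕ β))
          (v := Sum.inr (v j)) (w := Sum.inl ⟨j, u'⟩)
        omega
    · show _ ≤ H.dist z (v j) + (G j).dist (u j) u'.1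
      have h2 := dist_map_le (ιH G H u v) hHc z (v j)
      simp only [iH_apply] at h2
      have h3 := dist_map_le (ιG G H u v j) (hGc j) (u j) u'.1
      rw [iG_apply_u, hvj] at h3
      have t1 := hJ.dist_triangle (u := (Sum.inr z : (Σ i, {x : α i // x ≠ u i}) ⊕ β))
        (v := Sum.inr (v j)) (w := Sum.inl ⟨j, u'⟩)
      omega
  · -- lower bound
    obtain ⟨p, hp⟩ := hJ.exists_walk_length_eq_dist a (Sum.inl ⟨j, u'⟩)
    rw [← hp]
    exact Fpot_le_length G H u v hGc hHc j u' p

end Aux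

/-- For a vertex `u' ≠ u j` of `G j`, the set of vertices maximally distant from `u'`
in the glued graph `J` is
`(MD_{G j}(u') \ {u j}) ∪ (MD_H(v j) \ {v 1,…,v k}) ∪ ⋃ i ≠ j, MD_{G i}(u i)`. -/
theorem glue_maxDistant_from_Gj_vertex {k : ℕ} {α : Fin k → Type*} {β : Type*}
    (G : ∀ i, SimpleGraph (α i)) (H : SimpleGraph β)
    (u : ∀ i, α i) (v : Fin k → β)
    (hGc : ∀ i, (G i).Connected) (hHc : H.Connected)
    (hGn : ∀ i, Nontrivial (α i)) (hHn : Nontrivial β)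
    (j : Fin k) (u' : {z : α j // z ≠ u j}) :
    {a | MaxDistantFrom (glue G H u v) a (Sum.inl ⟨j, u'⟩)} =
      {a | (∃ x : {z : α j // z ≠ u j},
              a = Sum.inl ⟨j, x⟩ ∧ MaxDistantFrom (G j) x.1 u'.1) ∨
        (∃ z : β, a = Sum.inr z ∧ MaxDistantFrom H z (v j) ∧ ∀ i, z ≠ v i) ∨
        (∃ (i : Fin k) (x : {z : α i // z ≠ u i}), i ≠ j ∧
          a = Sum.inl ⟨i, x⟩ ∧ MaxDistantFrom (G i) x.1 (u i))} := by
  have D := glue_dist_eq G H u v hGc hHc j u'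
  ext a
  simp only [Set.mem_setOf_eq]
  constructor
  · intro hMD
    rcases a with ⟨i, x⟩ | z
    · by_cases hij : i = j
      · subst hij
        refine Or.inl ⟨x, rfl, ?_⟩
        intro y hy
        by_cases hyu : y = u i
        · subst hyu
          have hadj : (glue G H u v).Adj (Sum.inl ⟨i, x⟩) (Sum.inr (v i)) :=
            Or.inr (Or.inl ⟨i, x, hy, Or.inl ⟨rfl, rfl⟩⟩)
          have h := hMD _ hadj
          simp only [D, Fpot_inl, Fpot_inr, Faux_self, SimpleGraph.dist_self] at h
          omega
        · have hadj : (glue G H u v).Adj (Sum.inl ⟨i, x⟩) (Sum.inl ⟨i, ⟨y, hyu⟩⟩) :=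
            Or.inl ⟨i, x, ⟨y, hyu⟩, hy, rfl, rfl⟩
          have h := hMD _ hadj
          simp only [D, Fpot_inl, Faux_self] at h
          exact h
      · refine Or.inr (Or.inr ⟨i, x, hij, rfl, ?_⟩)
        intro y hy
        by_cases hyu : y = u i
        · subst hyu
          simp [SimpleGraph.dist_self]
        · have hadj : (glue G H u v).Adj (Sum.inl ⟨i, x⟩) (Sum.inl ⟨i, ⟨y, hyu⟩⟩) :=
            Or.inl ⟨i, x, ⟨y, hyu⟩, hy, rfl, rfl⟩
          have h := hMD _ hadj
          simp only [D, Fpot_inl] at h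
          rw [Faux_ne G H u v hij, Faux_ne G H u v hij] at h
          omega
    · refine Or.inr (Or.inl ⟨z, rfl, ?_, ?_⟩)
      · intro w' hw'
        have hadj : (glue G H u v).Adj (Sum.inr z) (Sum.inr w') :=
          Or.inr (Or.inr ⟨z, w', hw', rfl, rfl⟩)
        have h := hMD _ hadj
        simp only [D, Fpot_inr] at h
        omega
      · intro i hzi
        subst hzi
        by_cases hij : i = j
        · subst hij
          obtain ⟨w', hw'⟩ := exists_adj hHc hHn (v i)
          have hadj : (glue G H u v).Adj (Sum.inr (v i)) (Sum.inr w') :=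
            Or.inr (Or.inr ⟨_, _, hw', rfl, rfl⟩)
          have h := hMD _ hadj
          simp only [D, Fpot_inr, SimpleGraph.dist_self] at h
          have hpos : 0 < H.dist w' (v i) := hHc.pos_dist_of_ne hw'.ne'
          omega
        · obtain ⟨y, hy⟩ := exists_adj (hGc i) (hGn i) (u i)
          have hyne : y ≠ u i := hy.ne'
          have hadj : (glue G H u v).Adj (Sum.inr (v i)) (Sum.inl ⟨i, ⟨y, hyne⟩⟩) :=
            Or.inr (Or.inl ⟨i, ⟨y, hyne⟩, hy.symm, Or.inr ⟨rfl, rfl⟩⟩)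
          have h := hMD _ hadj
          simp only [D, Fpot_inr, Fpot_inl] at h
          rw [Faux_ne G H u v hij] at h
          have hpos : 0 < (G i).dist y (u i) := (hGc i).pos_dist_of_ne hyne
          omega
  · intro hR t hadj
    simp only [D]
    rcases hR with ⟨x, rfl, hx⟩ | ⟨z, rfl, hz, hzv⟩ | ⟨i, x, hij, rfl, hx⟩
    · rcases hadj with ⟨i', x', y', hxy, ha, hb⟩ | ⟨i', x', hx', ⟨ha, hb⟩ | ⟨hb, ha⟩⟩ |
        ⟨w, w', hww, ha, hb⟩
      · obtain ⟨rfl, h2⟩ := Sigma.mk.inj_iff.mp (Sum.inl.inj ha)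
        obtain rfl := eq_of_heq h2
        subst hb
        simp only [Fpot_inl, Faux_self]
        exact hx y'.1 hxy
      · obtain ⟨rfl, h2⟩ := Sigma.mk.inj_iff.mp (Sum.inl.inj ha)
        obtain rfl := eq_of_heq h2
        subst hb
        simp only [Fpot_inl, Fpot_inr, Faux_self, SimpleGraph.dist_self]
        simpa using hx _ hx'
      · exact absurd ha (by simp)
      · exact absurd ha (by simp)
    · rcases hadj with ⟨i', x', y', hxy, ha, hb⟩ | ⟨i', x', hx', ⟨ha, hb⟩ | ⟨hb, ha⟩⟩ |
        ⟨w, w', hww, ha, hb⟩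
      · exact absurd ha (by simp)
      · exact absurd ha (by simp)
      · exact absurd (Sum.inr.inj ha) (hzv i')
      · obtain rfl := Sum.inr.inj ha
        subst hb
        simp only [Fpot_inr]
        have := hz w' hww
        omega
    · rcases hadj with ⟨i', x', y', hxy, ha, hb⟩ | ⟨i', x', hx', ⟨ha, hb⟩ | ⟨hb, ha⟩⟩ |
        ⟨w, w', hww, ha, hb⟩
      · obtain ⟨rfl, h2⟩ := Sigma.mk.inj_iff.mp (Sum.inl.inj ha)
        obtain rfl := eq_of_heq h2
        subst hb
        simp only [Fpot_inl]
        rw [Faux_ne G H u v hij, Faux_ne G H u v hij]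
        have := hx y'.1 hxy
        omega
      · obtain ⟨rfl, h2⟩ := Sigma.mk.inj_iff.mp (Sum.inl.inj ha)
        obtain rfl := eq_of_heq h2
        subst hb
        simp only [Fpot_inl, Fpot_inr]
        rw [Faux_ne G H u v hij]
        omega
      · exact absurd ha (by simp)
      · exact absurd ha (by simp)
end

section
/- With the gluing construction J, two vertices u'_i ∈ V(G_i)\{u_i} and u'_j ∈ V(G_j)\{u_j} with i ≠ j are mutually maximally distant in J if and only if u'_i is maximally distant from u_i in G_i and u'_j is maximally distant from u_j in G_j. -/
open SimpleGraph

section GlueAux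

variable {k : ℕ} {α : Fin k → Type*} {β : Type*}
    (G : ∀ i, SimpleGraph (α i)) (H : SimpleGraph β) (u : ∀ i, α i) (v : Fin k → β)

open Classical in
/-- The canonical homomorphism from `G i` into the glued graph. -/
noncomputable def glueHomG (i : Fin k) : G i →g glue G H u v where
  toFun z := if h : z = u i then Sum.inr (v i) else Sum.inl ⟨i, ⟨z, h⟩⟩
  map_rel' := by
    intro a b hab
    by_cases ha : a = u i <;> by_cases hb : b = u i
    · subst ha; subst hb; exact ((G i).loopless.irrefl _ hab).elim
    · subst ha
      simp only [dif_pos rfl, dif_neg hb]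
      exact Or.inr (Or.inl ⟨i, ⟨b, hb⟩, hab.symm, Or.inr ⟨rfl, rfl⟩⟩)
    · subst hb
      simp only [dif_neg ha, dif_pos rfl]
      exact Or.inr (Or.inl ⟨i, ⟨a, ha⟩, hab, Or.inl ⟨rfl, rfl⟩⟩)
    · simp only [dif_neg ha, dif_neg hb]
      exact Or.inl ⟨i, ⟨a, ha⟩, ⟨b, hb⟩, hab, rfl, rfl⟩

/-- The canonical homomorphism from `H` into the glued graph. -/
def glueHomH : H →g glue G H u v where
  toFun := Sum.inr
  map_rel' := fun hab => Or.inr (Or.inr ⟨_, _, hab, rfl, rfl⟩)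

lemma glueHomH_apply (w : β) : glueHomH G H u v w = Sum.inr w := rfl

open Classical in
lemma glueHomG_ne (i : Fin k) (z : α i) (hz : z ≠ u i) :
    glueHomG G H u v i z = Sum.inl ⟨i, ⟨z, hz⟩⟩ := by
  have : glueHomG G H u v i z
      = if h : z = u i then Sum.inr (v i) else Sum.inl ⟨i, ⟨z, h⟩⟩ := rfl
  rw [this, dif_neg hz]

open Classical in
lemma glueHomG_eq (i : Fin k) : glueHomG G H u v i (u i) = Sum.inr (v i) := by
  have : glueHomG G H u v i (u i)
      = if h : u i = u i then Sum.inr (v i) else Sum.inl ⟨i, ⟨u i, h⟩⟩ := rfl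
  rw [this, dif_pos rfl]

lemma glue_reach_inr (hGc : ∀ i, (G i).Connected) (hHc : H.Connected)
    (a : (Σ i, {x : α i // x ≠ u i}) ⊕ β) (w : β) :
    (glue G H u v).Reachable a (Sum.inr w) := by
  obtain (⟨i, z⟩ | w') := a
  · have h1 : (glue G H u v).Reachable (Sum.inl ⟨i, z⟩) (Sum.inr (v i)) := by
      have := ((hGc i).preconnected z.1 (u i)).map (glueHomG G H u v i)
      rwa [glueHomG_ne G H u v i z.1 z.2, glueHomG_eq] at this
    exact h1.trans (((hHc.preconnected (v i) w).map (glueHomH G H u v)))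
  · exact (hHc.preconnected w' w).map (glueHomH G H u v)

lemma glue_reach (hGc : ∀ i, (G i).Connected) (hHc : H.Connected)
    (j : Fin k) (y : {z : α j // z ≠ u j}) (a : (Σ i, {x : α i // x ≠ u i}) ⊕ β) :
    (glue G H u v).Reachable a (Sum.inl ⟨j, y⟩) := by
  refine (glue_reach_inr G H u v hGc hHc a (v j)).trans ?_
  have := ((hGc j).preconnected (u j) y.1).map (glueHomG G H u v j)
  rwa [glueHomG_ne G H u v j y.1 y.2, glueHomG_eq] at this

/-- Potential function giving a lower bound on the distance to `Sum.inl ⟨j, y⟩`. -/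
noncomputable def glueD (j : Fin k) (y : α j) : ((Σ i, {x : α i // x ≠ u i}) ⊕ β) → ℕ
  | Sum.inr w => H.dist w (v j) + (G j).dist (u j) y
  | Sum.inl ⟨i, z⟩ =>
      if h : i = j then (G j).dist (h ▸ z.1) y
      else (G i).dist z.1 (u i) + H.dist (v i) (v j) + (G j).dist (u j) y

lemma glueD_inl_self (j : Fin k) (y : α j) (z : {z : α j // z ≠ u j}) :
    glueD G H u v j y (Sum.inl ⟨j, z⟩) = (G j).dist z.1 y := by
  simp [glueD]

lemma glueD_inl_ne {i j : Fin k} (h : i ≠ j) (y : α j) (z : {z : α i // z ≠ u i}) :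
    glueD G H u v j y (Sum.inl ⟨i, z⟩) =
      (G i).dist z.1 (u i) + H.dist (v i) (v j) + (G j).dist (u j) y := by
  simp [glueD, h]

lemma glueD_inr (j : Fin k) (y : α j) (w : β) :
    glueD G H u v j y (Sum.inr w) = H.dist w (v j) + (G j).dist (u j) y := rfl

lemma dist_le_of_adj {V : Type*} {Γ : SimpleGraph V} {a b : V} (h : Γ.Adj a b) :
    Γ.dist a b ≤ 1 := by
  simpa using Γ.dist_le h.toWalk

lemma dist_le_adj_right {V : Type*} {Γ : SimpleGraph V} (hc : Γ.Connected) {a b c : V}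
    (h : Γ.Adj a b) : Γ.dist a c ≤ Γ.dist b c + 1 := by
  calc Γ.dist a c ≤ Γ.dist a b + Γ.dist b c := hc.dist_triangle
    _ ≤ 1 + Γ.dist b c := by gcongr; exact dist_le_of_adj h
    _ = Γ.dist b c + 1 := by omega

lemma glueD_adj (hGc : ∀ i, (G i).Connected) (hHc : H.Connected)
    (j : Fin k) (y : α j) {a b : (Σ i, {x : α i // x ≠ u i}) ⊕ β}
    (hab : (glue G H u v).Adj a b) :
    glueD G H u v j y a ≤ glueD G H u v j y b + 1 := by
  rcases hab with ⟨i, x, x', hxy, rfl, rfl⟩ | ⟨i, x, hx, ⟨rfl, rfl⟩ | ⟨rfl, rfl⟩⟩ |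
      ⟨w, w', hww, rfl, rfl⟩
  · by_cases h : i = j
    · subst h
      rw [glueD_inl_self, glueD_inl_self]
      exact dist_le_adj_right (hGc i) (c := y) hxy
    · rw [glueD_inl_ne G H u v h, glueD_inl_ne G H u v h]
      have := dist_le_adj_right (hGc i) (c := u i) hxy
      omega
  · -- a = Sum.inl ⟨i, x⟩, b = Sum.inr (v i)
    by_cases h : i = j
    · subst h
      rw [glueD_inl_self, glueD_inr, SimpleGraph.dist_self, zero_add]
      exact dist_le_adj_right (hGc i) (c := y) hx
    · rw [glueD_inl_ne G H u v h, glueD_inr]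
      have := dist_le_of_adj hx
      omega
  · -- a = Sum.inr (v i), b = Sum.inl ⟨i, x⟩
    by_cases h : i = j
    · subst h
      rw [glueD_inl_self, glueD_inr, SimpleGraph.dist_self, zero_add]
      exact dist_le_adj_right (hGc i) (c := y) hx.symm
    · rw [glueD_inl_ne G H u v h, glueD_inr]
      omega
  · rw [glueD_inr, glueD_inr]
    have := dist_le_adj_right hHc (c := v j) hww
    omega

lemma glueD_le_length (hGc : ∀ i, (G i).Connected) (hHc : H.Connected)
    (j : Fin k) (y : {z : α j // z ≠ u j}) {a b : (Σ i, {x : α i // x ≠ u i}) ⊕ β}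
    (p : (glue G H u v).Walk a b) (hb : b = Sum.inl ⟨j, y⟩) :
    glueD G H u v j y.1 a ≤ p.length := by
  induction p with
  | nil =>
      subst hb
      rw [glueD_inl_self]
      simp
  | cons hadj p ih =>
      have := glueD_adj G H u v hGc hHc j y.1 hadj
      have := ih hb
      simp only [SimpleGraph.Walk.length_cons]
      omega

lemma glueD_le_dist (hGc : ∀ i, (G i).Connected) (hHc : H.Connected)
    (j : Fin k) (y : {z : α j // z ≠ u j}) (a : (Σ i, {x : α i // x ≠ u i}) ⊕ β) :
    glueD G H u v j y.1 a ≤ (glue G H u v).dist a (Sum.inl ⟨j, y⟩) := by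
  obtain ⟨p, hp⟩ := (glue_reach G H u v hGc hHc j y a).exists_walk_length_eq_dist
  rw [← hp]
  exact glueD_le_length G H u v hGc hHc j y p rfl

lemma glue_dist_inl_inl (hGc : ∀ i, (G i).Connected) (hHc : H.Connected)
    {i j : Fin k} (hij : i ≠ j) (x : {z : α i // z ≠ u i}) (y : {z : α j // z ≠ u j}) :
    (glue G H u v).dist (Sum.inl ⟨i, x⟩) (Sum.inl ⟨j, y⟩) =
      (G i).dist x.1 (u i) + H.dist (v i) (v j) + (G j).dist (u j) y.1 := by
  refine le_antisymm ?_ ?_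
  · obtain ⟨p1, hp1⟩ := ((hGc i).preconnected x.1 (u i)).exists_walk_length_eq_dist
    obtain ⟨p2, hp2⟩ := (hHc.preconnected (v i) (v j)).exists_walk_length_eq_dist
    obtain ⟨p3, hp3⟩ := ((hGc j).preconnected (u j) y.1).exists_walk_length_eq_dist
    have := (glue G H u v).dist_le
      ((((p1.map (glueHomG G H u v i)).copy
            (glueHomG_ne G H u v i x.1 x.2) (glueHomG_eq G H u v i)).append
          ((p2.map (glueHomH G H u v)).copy (glueHomH_apply G H u v (v i))
            (glueHomH_apply G H u v (v j)))).append
        ((p3.map (glueHomG G H u v j)).copy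
          (glueHomG_eq G H u v j) (glueHomG_ne G H u v j y.1 y.2)))
    simpa [hp1, hp2, hp3] using this
  · have := glueD_le_dist G H u v hGc hHc j y (Sum.inl ⟨i, x⟩)
    rwa [glueD_inl_ne G H u v hij] at this

lemma glue_dist_inr_inl (hGc : ∀ i, (G i).Connected) (hHc : H.Connected)
    (w : β) {j : Fin k} (y : {z : α j // z ≠ u j}) :
    (glue G H u v).dist (Sum.inr w) (Sum.inl ⟨j, y⟩) =
      H.dist w (v j) + (G j).dist (u j) y.1 := by
  refine le_antisymm ?_ ?_
  · obtain ⟨p2, hp2⟩ := (hHc.preconnected w (v j)).exists_walk_length_eq_dist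
    obtain ⟨p3, hp3⟩ := ((hGc j).preconnected (u j) y.1).exists_walk_length_eq_dist
    have := (glue G H u v).dist_le
      (((p2.map (glueHomH G H u v)).copy (glueHomH_apply G H u v w)
          (glueHomH_apply G H u v (v j))).append
        ((p3.map (glueHomG G H u v j)).copy
          (glueHomG_eq G H u v j) (glueHomG_ne G H u v j y.1 y.2)))
    simpa [hp2, hp3] using this
  · exact glueD_le_dist G H u v hGc hHc j y (Sum.inr w)

lemma glue_mdf_iff (hGc : ∀ i, (G i).Connected) (hHc : H.Connected)
    {i j : Fin k} (hij : i ≠ j) (x : {z : α i // z ≠ u i}) (y : {z : α j // z ≠ u j}) :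
    MaxDistantFrom (glue G H u v) (Sum.inl ⟨i, x⟩) (Sum.inl ⟨j, y⟩) ↔
      MaxDistantFrom (G i) x.1 (u i) := by
  constructor
  · intro h z hz
    by_cases hzu : z = u i
    · subst hzu
      rw [SimpleGraph.dist_self]
      exact Nat.zero_le _
    · have hadj : (glue G H u v).Adj (Sum.inl ⟨i, x⟩) (Sum.inl ⟨i, ⟨z, hzu⟩⟩) :=
        Or.inl ⟨i, x, ⟨z, hzu⟩, hz, rfl, rfl⟩
      have h1 := h _ hadj
      rw [glue_dist_inl_inl G H u v hGc hHc hij x y,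
        glue_dist_inl_inl G H u v hGc hHc hij ⟨z, hzu⟩ y] at h1
      exact Nat.le_of_add_le_add_right (Nat.le_of_add_le_add_right h1)
  · intro h z hz
    rcases hz with ⟨i', x', y', hxy, ha, rfl⟩ | ⟨i', x', hx', ⟨ha, rfl⟩ | ⟨rfl, ha⟩⟩ |
        ⟨w, w', hww, ha, rfl⟩
    · simp only [Sum.inl.injEq] at ha
      obtain ⟨rfl, h2⟩ := Sigma.mk.inj_iff.mp ha
      rw [heq_eq_eq] at h2
      subst h2
      rw [glue_dist_inl_inl G H u v hGc hHc hij x y,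
        glue_dist_inl_inl G H u v hGc hHc hij y' y]
      have h3 := h y'.1 hxy
      omega
    · simp only [Sum.inl.injEq] at ha
      obtain ⟨rfl, h2⟩ := Sigma.mk.inj_iff.mp ha
      rw [heq_eq_eq] at h2
      subst h2
      rw [glue_dist_inl_inl G H u v hGc hHc hij x y,
        glue_dist_inr_inl G H u v hGc hHc (v i) y]
      omega
    · simp at ha
    · simp at ha

end GlueAux

/-- Vertices `u'_i ∈ V(G i) \ {u i}` and `u'_j ∈ V(G j) \ {u j}` with `i ≠ j` are
mutually maximally distant in the glued graph `J` iff `u'_i` is maximally distant from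
`u i` in `G i` and `u'_j` is maximally distant from `u j` in `G j`. -/
theorem glue_mmd_between_parts {k : ℕ} {α : Fin k → Type*} {β : Type*}
    (G : ∀ i, SimpleGraph (α i)) (H : SimpleGraph β)
    (u : ∀ i, α i) (v : Fin k → β)
    (hGc : ∀ i, (G i).Connected) (hHc : H.Connected)
    (hGn : ∀ i, Nontrivial (α i)) (hHn : Nontrivial β)
    (i j : Fin k) (hij : i ≠ j) (x : {z : α i // z ≠ u i}) (y : {z : α j // z ≠ u j}) :
    MutuallyMaxDistant (glue G H u v) (Sum.inl ⟨i, x⟩) (Sum.inl ⟨j, y⟩) ↔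
      MaxDistantFrom (G i) x.1 (u i) ∧ MaxDistantFrom (G j) y.1 (u j) := by
  constructor
  · rintro ⟨h1, h2⟩
    exact ⟨(glue_mdf_iff G H u v hGc hHc hij x y).mp h1,
      (glue_mdf_iff G H u v hGc hHc hij.symm y x).mp h2⟩
  · rintro ⟨h1, h2⟩
    exact ⟨(glue_mdf_iff G H u v hGc hHc hij x y).mpr h1,
      (glue_mdf_iff G H u v hGc hHc hij.symm y x).mpr h2⟩
end

section
/- With the gluing construction J, two vertices v', v'' ∈ V(H) \ {v_1,...,v_k} are mutually maximally distant in J if and only if they are mutually maximally distant in H. -/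
open SimpleGraph

section Aux

variable {k : ℕ} {α : Fin k → Type*} {β : Type*}
    (G : ∀ i, SimpleGraph (α i)) (H : SimpleGraph β) (u : ∀ i, α i) (v : Fin k → β)

/-- Projection of the glued graph's vertices onto `β`. -/
def glueProj (G : ∀ i, SimpleGraph (α i)) (H : SimpleGraph β) :
    ((Σ i, {x : α i // x ≠ u i}) ⊕ β) → β :=
  Sum.elim (fun p => v p.1) id

/-- `Sum.inr` as a graph homomorphism `H →g glue G H u v`. -/
def glueInr : H →g glue G H u v where
  toFun := Sum.inr
  map_rel' := fun h => Or.inr (Or.inr ⟨_, _, h, rfl, rfl⟩)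

lemma glue_walk_proj : ∀ {x y} (W : (glue G H u v).Walk x y),
    ∃ W' : H.Walk (glueProj u v G H x) (glueProj u v G H y), W'.length ≤ W.length := by
  intro x y W
  induction W with
  | nil => exact ⟨SimpleGraph.Walk.nil, le_rfl⟩
  | cons h W ih =>
    obtain ⟨W', hW'⟩ := ih
    rcases h with ⟨i, x', y', hxy, ha, hb⟩ | ⟨i, x', hx, ⟨ha, hb⟩ | ⟨ha, hb⟩⟩ |
        ⟨a, b, hab, ha, hb⟩
    · subst ha; subst hb
      exact ⟨W', hW'.trans (Nat.le_succ _)⟩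
    · subst ha; subst hb
      exact ⟨W', hW'.trans (Nat.le_succ _)⟩
    · subst ha; subst hb
      exact ⟨W', hW'.trans (Nat.le_succ _)⟩
    · subst ha; subst hb
      refine ⟨SimpleGraph.Walk.cons hab W', ?_⟩
      exact Nat.succ_le_succ hW'
  
lemma glue_dist_inr (hHc : H.Connected) (a b : β) :
    (glue G H u v).dist (Sum.inr a) (Sum.inr b) = H.dist a b := by
  apply le_antisymm
  · obtain ⟨W, hW⟩ := hHc.exists_walk_length_eq_dist a b
    calc (glue G H u v).dist (Sum.inr a) (Sum.inr b)
        ≤ (W.map (glueInr G H u v)).length := SimpleGraph.dist_le _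
      _ = H.dist a b := by rw [SimpleGraph.Walk.length_map]; exact hW
  · have hreach : (glue G H u v).Reachable (Sum.inr a) (Sum.inr b) :=
      ((hHc a b).map (glueInr G H u v))
    obtain ⟨W, hW⟩ := hreach.exists_walk_length_eq_dist
    obtain ⟨W', hW'⟩ := glue_walk_proj G H u v W
    calc H.dist a b ≤ W'.length := SimpleGraph.dist_le _
      _ ≤ W.length := hW'
      _ = _ := hW

lemma glue_adj_inr {w : β} (hw : ∀ i, w ≠ v i) (z) :
    (glue G H u v).Adj (Sum.inr w) z ↔ ∃ b, H.Adj w b ∧ z = Sum.inr b := by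
  constructor
  · rintro (⟨i, x', y', hxy, ha, hb⟩ | ⟨i, x', hx, ⟨ha, hb⟩ | ⟨ha, hb⟩⟩ | ⟨a, b, hab, ha, hb⟩)
    · exact absurd ha (by simp)
    · exact absurd ha (by simp)
    · exact absurd (Sum.inr.inj hb) (hw i)
    · exact ⟨b, Sum.inr.inj ha ▸ hab, hb⟩
  · rintro ⟨b, hab, rfl⟩
    exact Or.inr (Or.inr ⟨w, b, hab, rfl, rfl⟩)

end Aux

/-- Two vertices of `V(H) \ {v 1,…,v k}` are mutually maximally distant in the glued
graph `J` iff they are mutually maximally distant in `H`. -/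
theorem glue_mmd_within_H {k : ℕ} {α : Fin k → Type*} {β : Type*}
    (G : ∀ i, SimpleGraph (α i)) (H : SimpleGraph β)
    (u : ∀ i, α i) (v : Fin k → β)
    (hGc : ∀ i, (G i).Connected) (hHc : H.Connected)
    (hGn : ∀ i, Nontrivial (α i)) (hHn : Nontrivial β)
    (w w' : β) (hw : ∀ i, w ≠ v i) (hw' : ∀ i, w' ≠ v i) :
    MutuallyMaxDistant (glue G H u v) (Sum.inr w) (Sum.inr w') ↔
      MutuallyMaxDistant H w w' := by
  have hd := glue_dist_inr G H u v hHc
  constructor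
  · rintro ⟨h1, h2⟩
    constructor
    · intro z hz
      have := h1 (Sum.inr z) ((glue_adj_inr G H u v hw _).mpr ⟨z, hz, rfl⟩)
      simpa [hd] using this
    · intro z hz
      have := h2 (Sum.inr z) ((glue_adj_inr G H u v hw' _).mpr ⟨z, hz, rfl⟩)
      simpa [hd] using this
  · rintro ⟨h1, h2⟩
    constructor
    · intro z hz
      obtain ⟨b, hb, rfl⟩ := (glue_adj_inr G H u v hw _).mp hz
      simpa [hd] using h1 b hb
    · intro z hz
      obtain ⟨b, hb, rfl⟩ := (glue_adj_inr G H u v hw' _).mp hz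
      simpa [hd] using h2 b hb
end
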